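/- Let (X, μ, T) and (Y, ν, S) be invertible measure-preserving systems with probability measures, and let A ⊆ X, B ⊆ Y be measurable with μ(A) > 0 and ν(B) > 0. Then there exists a positive integer k, bounded above by a constant depending only on μ(A) and ν(B), such that every element of kℤ is a product r·s with r ∈ R(A) and s ∈ R(B), where R(A) = {n ∈ ℤ : μ(A ∩ T^n A) > 0} and R(B) = {n ∈ ℤ : ν(B ∩ S^n B) > 0}. -/

import Mathlib

open MeasureTheory
open scoped ENNReal

/-! ### Permutation power measure API -/

section perm
variable {X : Type} [MeasurableSpace X] {μ : Measure X}

theorem coe_perm_mul (U V : Equiv.Perm X) : ⇑(U * V) = ⇑U ∘ ⇑V := by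
  ext x; simp [Equiv.Perm.mul_apply]

theorem mp_symm (T : Equiv.Perm X) (hT : Measurable T) (hT' : Measurable T.symm)
    (hTm : MeasurePreserving T μ μ) : MeasurePreserving (⇑T.symm) μ μ := by
  refine ⟨hT', ?_⟩
  calc Measure.map (⇑T.symm) μ = Measure.map (⇑T.symm) (Measure.map (⇑T) μ) := by rw [hTm.map_eq]
    _ = Measure.map (⇑T.symm ∘ ⇑T) μ := Measure.map_map hT' hT
    _ = μ := by simp

theorem mp_pow (T : Equiv.Perm X) (hT : Measurable T) (hTm : MeasurePreserving T μ μ) (n : ℕ) :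
    MeasurePreserving (⇑(T ^ n)) μ μ := by
  induction n with
  | zero => simpa using MeasurePreserving.id μ
  | succ n ih =>
      rw [pow_succ, coe_perm_mul]
      exact ih.comp hTm

theorem mp_zpow (T : Equiv.Perm X) (hT : Measurable T) (hT' : Measurable T.symm)
    (hTm : MeasurePreserving T μ μ) (z : ℤ) : MeasurePreserving (⇑(T ^ z)) μ μ := by
  cases z with
  | ofNat n => simpa using mp_pow T hT hTm n
  | negSucc n =>
      rw [zpow_negSucc]
      have h1 : ((T ^ (n+1))⁻¹ : Equiv.Perm X) = (T⁻¹ : Equiv.Perm X) ^ (n+1) :=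
        (inv_pow T (n+1)).symm
      rw [h1, Equiv.Perm.inv_def]
      exact mp_pow T.symm hT' (mp_symm T hT hT' hTm) (n+1)

theorem perm_zpow_image (T : Equiv.Perm X) (z : ℤ) (s : Set X) :
    ⇑(T ^ z) '' s = ⇑(T ^ (-z)) ⁻¹' s := by
  rw [Equiv.image_eq_preimage_symm]
  congr 1
  rw [zpow_neg, Equiv.Perm.inv_def]

theorem perm_zpow_image_inter (T : Equiv.Perm X) (a b : ℤ) (s t : Set X) :
    ⇑(T ^ a) '' s ∩ ⇑(T ^ b) '' t = ⇑(T ^ a) '' (s ∩ ⇑(T ^ (b - a)) '' t) := by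
  rw [Set.image_inter (T ^ a).injective]
  congr 1
  rw [← Set.image_comp, ← coe_perm_mul, ← zpow_add]
  congr 2
  ring

variable (T : Equiv.Perm X) (hT : Measurable T) (hT' : Measurable T.symm)
    (hTm : MeasurePreserving T μ μ)

include hT hT' hTm

theorem meas_zpow_image (z : ℤ) {s : Set X} (hs : MeasurableSet s) :
    MeasurableSet (⇑(T ^ z) '' s) := by
  rw [perm_zpow_image]
  exact (mp_zpow T hT hT' hTm (-z)).measurable hs

theorem measure_zpow_image (z : ℤ) {s : Set X} (hs : MeasurableSet s) :
    μ (⇑(T ^ z) '' s) = μ s := by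
  rw [perm_zpow_image]
  exact (mp_zpow T hT hT' hTm (-z)).measure_preimage hs.nullMeasurableSet

theorem measure_inter_image_shift (a b : ℤ) {A : Set X} (hA : MeasurableSet A) :
    μ (⇑(T ^ a) '' A ∩ ⇑(T ^ b) '' A) = μ (A ∩ ⇑(T ^ (b - a)) '' A) := by
  rw [perm_zpow_image_inter]
  exact measure_zpow_image T hT hT' hTm a (hA.inter (meas_zpow_image T hT hT' hTm _ hA))

theorem measure_inter_image_symm (z : ℤ) {A : Set X} (hA : MeasurableSet A) :
    μ (A ∩ ⇑(T ^ (-z)) '' A) = μ (A ∩ ⇑(T ^ z) '' A) := by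
  have h0 : ⇑(T ^ (0:ℤ)) '' A = A := by simp
  have h := measure_inter_image_shift T hT hT' hTm z 0 hA
  rw [h0, zero_sub] at h
  rw [← h, Set.inter_comm]

theorem key_pair [IsProbabilityMeasure μ]
    {A : Set X} (hA : MeasurableSet A) {M : ℕ} (hM : 1 < (M : ℝ≥0∞) * μ A)
    (x : Fin M → ℤ) (hx : Function.Injective x) :
    ∃ i j : Fin M, i ≠ j ∧ 0 < μ (A ∩ ⇑(T ^ (x j - x i)) '' A) := by
  by_contra hcon
  push_neg at hcon
  set C : Fin M → Set X := fun i => ⇑(T ^ x i) '' A with hC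
  have hCmeas : ∀ i, MeasurableSet (C i) := fun i => meas_zpow_image T hT hT' hTm _ hA
  have hCα : ∀ i, μ (C i) = μ A := fun i => measure_zpow_image T hT hT' hTm _ hA
  have hCij : ∀ i j : Fin M, i ≠ j → μ (C i ∩ C j) = 0 := by
    intro i j hij
    rw [hC]
    simp only
    rw [measure_inter_image_shift T hT hT' hTm (x i) (x j) hA]
    exact le_antisymm (by simpa using hcon i j hij) zero_le
  have main : ∀ s : Finset (Fin M), (s.card : ℝ≥0∞) * μ A ≤ μ (⋃ i ∈ s, C i) := by
    intro s
    induction s using Finset.induction_on with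
    | empty => simp
    | @insert a s ha ih =>
        have hU : MeasurableSet (⋃ i ∈ s, C i) :=
          MeasurableSet.biUnion (Finset.countable_toSet s) (fun i _ => hCmeas i)
        have hCaU : μ (C a ∩ ⋃ i ∈ s, C i) = 0 := by
          rw [Set.inter_iUnion₂]
          refine measure_biUnion_null_iff (Finset.countable_toSet s) |>.2 ?_
          intro i hi
          exact hCij a i (fun h => ha (h ▸ hi))
        have h1 : μ A ≤ μ (C a \ ⋃ i ∈ s, C i) := by
          have hsplit : μ (C a) ≤ μ (C a \ ⋃ i ∈ s, C i) + μ (C a ∩ ⋃ i ∈ s, C i) := by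
            refine le_trans (measure_mono ?_) (measure_union_le _ _)
            intro y hy
            by_cases hyU : y ∈ ⋃ i ∈ s, C i
            · exact Or.inr ⟨hy, hyU⟩
            · exact Or.inl ⟨hy, hyU⟩
          rw [hCaU, add_zero] at hsplit
          exact (hCα a) ▸ hsplit
        have hunion : μ (⋃ i ∈ insert a s, C i) = μ (C a \ ⋃ i ∈ s, C i) + μ (⋃ i ∈ s, C i) := by
          rw [Finset.set_biUnion_insert]
          have h2 : C a ∪ ⋃ i ∈ s, C i = (C a \ ⋃ i ∈ s, C i) ∪ ⋃ i ∈ s, C i :=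
            (Set.diff_union_self).symm
          rw [h2]
          exact measure_union (Set.disjoint_sdiff_left) hU
        rw [Finset.card_insert_of_notMem ha, hunion]
        push_cast
        calc ((s.card : ℝ≥0∞) + 1) * μ A = μ A + (s.card : ℝ≥0∞) * μ A := by ring
          _ ≤ μ (C a \ ⋃ i ∈ s, C i) + μ (⋃ i ∈ s, C i) := add_le_add h1 ih
  have hfin := main Finset.univ
  rw [Finset.card_univ, Fintype.card_fin] at hfin
  have hle1 : μ (⋃ i ∈ (Finset.univ : Finset (Fin M)), C i) ≤ 1 := prob_le_one
  exact absurd (lt_of_lt_of_le hM (le_trans hfin hle1)) (by simp)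

end perm

/-! ### Ramsey -/

section ramsey
variable {κ : Type} [Fintype κ] [DecidableEq κ] [Nonempty κ]

theorem greedy (c : ℕ → ℕ → κ) :
    ∀ (T : ℕ) (X : Finset ℕ), (Fintype.card κ + 1) ^ T ≤ X.card →
    ∃ l : List (ℕ × κ), l.length = T ∧ (∀ p ∈ l, p.1 ∈ X) ∧
      List.Pairwise (fun p q => c p.1 q.1 = p.2 ∧ p.1 ≠ q.1) l := by
  intro T
  induction T with
  | zero => intro X _; exact ⟨[], rfl, by simp, by simp⟩
  | succ T ih =>
    intro X hX
    set r := Fintype.card κ with hr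
    have hXne : X.Nonempty := by
      have : 0 < X.card := lt_of_lt_of_le (pow_pos (Nat.succ_pos r) (T+1)) hX
      exact Finset.card_pos.1 this
    obtain ⟨a, ha⟩ := hXne
    have hcard : r * (r+1)^T ≤ (X.erase a).card := by
      rw [Finset.card_erase_of_mem ha]
      have h1 : (r+1)^(T+1) = r * (r+1)^T + (r+1)^T := by ring
      have h2 : 1 ≤ (r+1)^T := Nat.one_le_pow _ _ (Nat.succ_pos r)
      omega
    obtain ⟨k, -, hk⟩ := Finset.exists_le_card_fiber_of_mul_le_card_of_maps_to
      (f := fun x => c a x) (s := X.erase a) (t := Finset.univ)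
      (fun x _ => Finset.mem_univ _) Finset.univ_nonempty (by simpa using hcard)
    obtain ⟨l, hlen, hmem, hpw⟩ := ih _ hk
    refine ⟨(a, k) :: l, by simp [hlen], ?_, ?_⟩
    · intro p hp
      rcases List.mem_cons.1 hp with h | h
      · rw [h]; exact ha
      · exact Finset.mem_of_mem_erase (Finset.mem_filter.1 (hmem p h)).1
    · refine List.pairwise_cons.2 ⟨?_, hpw⟩
      intro q hq
      have hq' := Finset.mem_filter.1 (hmem q hq)
      exact ⟨hq'.2, fun h => (Finset.ne_of_mem_erase hq'.1) h.symm⟩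

theorem ramsey_exists (κ' : Type) [Fintype κ'] [DecidableEq κ'] [Nonempty κ'] (s : ℕ) :
    ∃ n : ℕ, 0 < n ∧ ∀ c : ℕ → ℕ → κ', (∀ u v, c u v = c v u) →
      ∃ (Q : Finset ℕ) (k : κ'), (∀ q ∈ Q, q < n) ∧ s ≤ Q.card ∧
        (∀ u ∈ Q, ∀ v ∈ Q, u ≠ v → c u v = k) := by
  classical
  set r := Fintype.card κ' with hr
  refine ⟨(r+1)^(r*s), pow_pos (Nat.succ_pos r) _, ?_⟩
  intro c hsym
  obtain ⟨l, hlen, hmem, hpw⟩ := greedy c (r*s) (Finset.range ((r+1)^(r*s)))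
    (by rw [Finset.card_range])
  have hdist : ∀ p ∈ l, ∀ q ∈ l, p ≠ q → p.1 ≠ q.1 := by
    have h1 : l.Pairwise (fun p q : ℕ × κ' => p.1 ≠ q.1) := hpw.imp (fun h => h.2)
    haveI : Std.Symm (fun p q : ℕ × κ' => p.1 ≠ q.1) := ⟨fun p q h => h.symm⟩
    exact h1.forall
  have hnodup : l.Nodup := by
    refine List.Pairwise.imp ?_ hpw
    intro p q h hpq
    exact h.2 (by rw [hpq])
  have hcardT : l.toFinset.card = r * s := by
    rw [List.toFinset_card_of_nodup hnodup, hlen]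
  obtain ⟨k, -, hk⟩ := Finset.exists_le_card_fiber_of_mul_le_card_of_maps_to
    (f := Prod.snd) (s := l.toFinset) (t := Finset.univ) (n := s)
    (fun x _ => Finset.mem_univ _) Finset.univ_nonempty
    (by rw [hcardT]; simp [hr])
  set F := {x ∈ l.toFinset | x.snd = k} with hF
  refine ⟨F.image Prod.fst, k, ?_, ?_, ?_⟩
  · intro q hq
    obtain ⟨p, hp, hpq⟩ := Finset.mem_image.1 hq
    have : p.1 ∈ Finset.range ((r+1)^(r*s)) :=
      hmem p (List.mem_toFinset.1 (Finset.mem_filter.1 hp).1)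
    rw [← hpq]
    exact Finset.mem_range.1 this
  · refine le_trans hk (le_of_eq ?_)
    refine (Finset.card_image_of_injOn ?_).symm
    intro p hp q hq hpq
    by_contra hne
    exact hdist p (List.mem_toFinset.1 (Finset.mem_filter.1 hp).1)
      q (List.mem_toFinset.1 (Finset.mem_filter.1 hq).1) hne hpq
  · intro u hu v hv huv
    obtain ⟨p, hp, hpu⟩ := Finset.mem_image.1 hu
    obtain ⟨q, hq, hqv⟩ := Finset.mem_image.1 hv
    have hpl := List.mem_toFinset.1 (Finset.mem_filter.1 hp).1
    have hql := List.mem_toFinset.1 (Finset.mem_filter.1 hq).1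
    have hpk : p.2 = k := (Finset.mem_filter.1 hp).2
    have hqk : q.2 = k := (Finset.mem_filter.1 hq).2
    have hpqne : p ≠ q := fun h => huv (by rw [← hpu, ← hqv, h])
    have hcol : ∀ p' ∈ l, ∀ q' ∈ l, p' ≠ q' →
        (c p'.1 q'.1 = p'.2 ∨ c q'.1 p'.1 = q'.2) := by
      have h1 : l.Pairwise (fun p' q' : ℕ × κ' =>
          c p'.1 q'.1 = p'.2 ∨ c q'.1 p'.1 = q'.2) := hpw.imp (fun h => Or.inl h.1)
      haveI : Std.Symm (fun p' q' : ℕ × κ' =>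
          c p'.1 q'.1 = p'.2 ∨ c q'.1 p'.1 = q'.2) := ⟨fun p' q' h => h.symm⟩
      exact h1.forall
    rcases hcol p hpl q hql hpqne with h | h
    · rw [← hpu, ← hqv, h, hpk]
    · rw [← hpu, ← hqv, hsym, h, hqk]
end ramsey

/-! ### Numerical bounds -/

noncomputable def Mnat (a : ℝ) : ℕ := ⌊a⁻¹⌋₊ + 1

lemma Mnat_two (a : ℝ) (h0 : 0 < a) (h1 : a ≤ 1) : 2 ≤ Mnat a := by
  have h2 : (1:ℝ) ≤ a⁻¹ := (one_le_inv₀ h0).2 h1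
  have h3 : 1 ≤ ⌊a⁻¹⌋₊ := Nat.le_floor (by exact_mod_cast h2)
  simp only [Mnat]; omega

lemma one_lt_Mnat_mul {X : Type} [MeasurableSpace X] (μ : Measure X) [IsProbabilityMeasure μ]
    (A : Set X) (hA : 0 < μ A) : 1 < (Mnat ((μ A).toReal) : ℝ≥0∞) * μ A := by
  have hfin : μ A ≠ ∞ := measure_ne_top μ A
  have hpos : 0 < (μ A).toReal := ENNReal.toReal_pos hA.ne' hfin
  set aR := (μ A).toReal with haR
  have hlt : aR⁻¹ < (Mnat aR : ℝ) := by
    have := Nat.lt_floor_add_one (aR⁻¹)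
    simpa [Mnat] using this
  have hreal : 1 < (Mnat aR : ℝ) * aR := by
    calc (1:ℝ) = aR⁻¹ * aR := by field_simp
    _ < (Mnat aR : ℝ) * aR := mul_lt_mul_of_pos_right hlt hpos
  have hμA : μ A = ENNReal.ofReal aR := by rw [haR, ENNReal.ofReal_toReal hfin]
  rw [hμA]
  have hcast : ((Mnat aR : ℕ) : ℝ≥0∞) = ENNReal.ofReal ((Mnat aR : ℕ) : ℝ) := by
    rw [ENNReal.ofReal_natCast]
  rw [hcast, ← ENNReal.ofReal_mul (by positivity)]
  calc (1:ℝ≥0∞) = ENNReal.ofReal 1 := by simp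
  _ < ENNReal.ofReal ((Mnat aR : ℝ) * aR) := by
      rw [ENNReal.ofReal_lt_ofReal_iff (by positivity)]
      exact hreal

noncomputable def ramseyN (b s : ℕ) : ℕ :=
  Classical.choose (ramsey_exists (Fin b → Bool) s)

lemma ramseyN_spec (b s : ℕ) : 0 < ramseyN b s ∧
    ∀ c : ℕ → ℕ → (Fin b → Bool), (∀ u v, c u v = c v u) →
      ∃ (Q : Finset ℕ) (k : Fin b → Bool), (∀ q ∈ Q, q < ramseyN b s) ∧ s ≤ Q.card ∧
        (∀ u ∈ Q, ∀ v ∈ Q, u ≠ v → c u v = k) :=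
  Classical.choose_spec (ramsey_exists (Fin b → Bool) s)

noncomputable def Kfun (a b : ℝ) : ℕ :=
  ((Mnat b).factorial * ramseyN (Mnat b) (Mnat a)).factorial

/-! ### Main theorem -/

theorem kZ_subset_return_times_product :
    ∃ K : ℝ → ℝ → ℕ,
      ∀ (X Y : Type) (_ : MeasurableSpace X) (_ : MeasurableSpace Y)
        (μ : Measure X) (ν : Measure Y),
        IsProbabilityMeasure μ → IsProbabilityMeasure ν →
        ∀ (T : Equiv.Perm X) (S : Equiv.Perm Y),
          Measurable T → Measurable T.symm → MeasurePreserving T μ μ →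
          Measurable S → Measurable S.symm → MeasurePreserving S ν ν →
          ∀ (A : Set X) (B : Set Y), MeasurableSet A → MeasurableSet B →
            0 < μ A → 0 < ν B →
            ∃ k : ℕ, 0 < k ∧ k ≤ K (μ A).toReal (ν B).toReal ∧
              ∀ n : ℤ, (k : ℤ) ∣ n →
                ∃ r s : ℤ, 0 < μ (A ∩ ⇑(T ^ r) '' A) ∧
                  0 < ν (B ∩ ⇑(S ^ s) '' B) ∧ n = r * s := by
  classical
  refine ⟨Kfun, ?_⟩
  intro X Y mX mY μ ν hμ hν T S hT hT' hTm hS hS' hSm A B hA hB hμA hνB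
  set NA := Mnat ((μ A).toReal) with hNAdef
  set NB := Mnat ((ν B).toReal) with hNBdef
  set nR := ramseyN NB NA with hnRdef
  set Cb := NB.factorial * nR with hCbdef
  set k := Cb.factorial with hkdef
  have hkpos : 0 < k := Nat.factorial_pos _
  have hNA2 : 2 ≤ NA := by
    refine Mnat_two _ (ENNReal.toReal_pos hμA.ne' (measure_ne_top μ A)) ?_
    have := prob_le_one (μ := μ) (s := A)
    calc (μ A).toReal ≤ (1:ℝ≥0∞).toReal := ENNReal.toReal_mono (by simp) this
    _ = 1 := by simp
  have hNB2 : 2 ≤ NB := by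
    refine Mnat_two _ (ENNReal.toReal_pos hνB.ne' (measure_ne_top ν B)) ?_
    have := prob_le_one (μ := ν) (s := B)
    calc (ν B).toReal ≤ (1:ℝ≥0∞).toReal := ENNReal.toReal_mono (by simp) this
    _ = 1 := by simp
  refine ⟨k, hkpos, le_of_eq (by rw [hkdef, hCbdef, hnRdef, hNAdef, hNBdef]; rfl), ?_⟩
  intro n hdvd
  set m := n / (k:ℤ) with hmdef
  have hn : (k:ℤ) * m = n := Int.mul_ediv_cancel' hdvd
  by_cases hm0 : m = 0
  · refine ⟨0, 0, ?_, ?_, ?_⟩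
    · simpa using hμA
    · simpa using hνB
    · rw [← hn, hm0]; ring
  -- main case
  · have keyA := fun (x : Fin NA → ℤ) (hx : Function.Injective x) =>
      key_pair T hT hT' hTm hA (one_lt_Mnat_mul μ A hμA) x hx
    have keyB := fun (y : Fin NB → ℤ) (hy : Function.Injective y) =>
      key_pair S hS hS' hSm hB (one_lt_Mnat_mul ν B hνB) y hy
    -- the Gd function
    set Gd : Fin NB → ℕ := fun i => NB.factorial / (i.1 + 1) with hGddef
    have hGd : ∀ i : Fin NB, (i.1 + 1) * Gd i = NB.factorial := by
      intro i
      exact Nat.mul_div_cancel' (Nat.dvd_factorial (Nat.succ_pos _) i.2)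
    have hGdpos : ∀ i : Fin NB, 0 < Gd i := by
      intro i
      exact Nat.div_pos (Nat.le_of_dvd (Nat.factorial_pos NB)
        (Nat.dvd_factorial (Nat.succ_pos _) i.2)) (Nat.succ_pos _)
    -- coloring
    set col : ℕ → ℕ → (Fin NB → Bool) := fun u v i =>
      decide (0 < μ (A ∩ ⇑(T ^ (m * (Gd i : ℤ) * ((v:ℤ) - (u:ℤ)))) '' A)) with hcoldef
    have hsym : ∀ u v, col u v = col v u := by
      intro u v
      funext i
      rw [hcoldef]
      simp only
      have he : m * (Gd i : ℤ) * ((u:ℤ) - (v:ℤ)) = -(m * (Gd i : ℤ) * ((v:ℤ) - (u:ℤ))) := by ring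
      have hmeq : μ (A ∩ ⇑(T ^ (m * (Gd i : ℤ) * ((u:ℤ) - (v:ℤ)))) '' A)
          = μ (A ∩ ⇑(T ^ (m * (Gd i : ℤ) * ((v:ℤ) - (u:ℤ)))) '' A) := by
        rw [he, measure_inter_image_symm T hT hT' hTm _ hA]
      exact decide_eq_decide.2 (by rw [hmeq])
    obtain ⟨Q, kst, hQlt, hQcard, hQmono⟩ := (ramseyN_spec NB NA).2 col hsym
    obtain ⟨Q', hQ'sub, hQ'card⟩ := Finset.exists_subset_card_eq hQcard
    set e := Q'.orderEmbOfFin hQ'card with hedef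
    have hemem : ∀ t, (e t : ℕ) ∈ Q := fun t => hQ'sub (Q'.orderEmbOfFin_mem hQ'card t)
    -- all colors true
    have hall : ∀ i : Fin NB, kst i = true := by
      intro i
      have hmGd : (m * (Gd i : ℤ)) ≠ 0 :=
        mul_ne_zero hm0 (by exact_mod_cast (hGdpos i).ne')
      obtain ⟨t, t', htt', hpos⟩ := keyA (fun t => m * (Gd i : ℤ) * ((e t : ℕ) : ℤ))
        (by
          intro t t' h
          simp only at h
          have h2 : ((e t : ℕ) : ℤ) = ((e t' : ℕ) : ℤ) := by
            rw [mul_assoc, mul_assoc] at h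
            have h3 := mul_left_cancel₀ hm0 h
            exact mul_left_cancel₀ (by exact_mod_cast (hGdpos i).ne' : (Gd i : ℤ) ≠ 0) h3
          exact e.injective (by exact_mod_cast h2))
      have hexp : m * (Gd i : ℤ) * ((e t' : ℕ) : ℤ) - m * (Gd i : ℤ) * ((e t : ℕ) : ℤ)
          = m * (Gd i : ℤ) * (((e t' : ℕ) : ℤ) - ((e t : ℕ) : ℤ)) := by ring
      rw [hexp] at hpos
      have hne : (e t : ℕ) ≠ (e t' : ℕ) := fun h => htt' (e.injective (by exact_mod_cast h))
      have hcc : col (e t) (e t') = kst := hQmono _ (hemem t) _ (hemem t') hne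
      have : col (e t) (e t') i = true := by
        rw [hcoldef]
        simp only
        exact decide_eq_true hpos
      rw [hcc] at this
      exact this
    -- the pair
    have h01 : (⟨0, by omega⟩ : Fin NA) < (⟨1, by omega⟩ : Fin NA) := by
      simp [Fin.lt_def]
    set q0 := (e ⟨0, by omega⟩ : ℕ) with hq0def
    set q1 := (e ⟨1, by omega⟩ : ℕ) with hq1def
    have hq01 : q0 < q1 := e.strictMono h01
    have hq0Q : q0 ∈ Q := hemem _
    have hq1Q : q1 ∈ Q := hemem _
    clear_value q0 q1
    have hpos01 : ∀ i : Fin NB,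
        0 < μ (A ∩ ⇑(T ^ (m * (Gd i : ℤ) * ((q1:ℤ) - (q0:ℤ)))) '' A) := by
      intro i
      have hcc : col q0 q1 = kst := hQmono _ hq0Q _ hq1Q (Nat.ne_of_lt hq01)
      have : col q0 q1 i = true := by rw [hcc]; exact hall i
      rw [hcoldef] at this
      simp only at this
      exact of_decide_eq_true this
    obtain ⟨δ, hδdef⟩ : ∃ δ : ℤ, δ = (q1 : ℤ) - (q0 : ℤ) := ⟨_, rfl⟩
    have hδpos : 0 < δ := by
      rw [hδdef]
      exact sub_pos.2 (by exact_mod_cast hq01)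
    obtain ⟨Yv, hYdef⟩ : ∃ Yv : ℤ, Yv = (NB.factorial : ℤ) * δ := ⟨_, rfl⟩
    have hYpos : 0 < Yv := by
      rw [hYdef]
      have : (0:ℤ) < NB.factorial := by exact_mod_cast Nat.factorial_pos NB
      positivity
    have hYle : Yv ≤ (Cb : ℤ) := by
      rw [hYdef, hCbdef]
      push_cast
      have hq1lt : q1 < nR := hQlt _ hq1Q
      have hδle : δ ≤ (nR : ℤ) := by
        rw [hδdef]
        have h1 : (q1 : ℤ) < (nR : ℤ) := by exact_mod_cast hq1lt
        have h2 : (0 : ℤ) ≤ (q0 : ℤ) := by positivity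
        omega
      have : (0:ℤ) < NB.factorial := by exact_mod_cast Nat.factorial_pos NB
      nlinarith
    have hYdvd : Yv ∣ (k : ℤ) := by
      have h1 : Yv = (Yv.toNat : ℤ) := (Int.toNat_of_nonneg hYpos.le).symm
      have h2 : Yv.toNat ∣ Cb.factorial := by
        refine Nat.dvd_factorial ?_ ?_
        · omega
        · have := hYle; omega
      rw [h1, hkdef]
      exact_mod_cast h2
    obtain ⟨k', hk'⟩ := hYdvd
    have hk'0 : k' ≠ 0 := by
      intro h
      rw [h, mul_zero] at hk'
      have : (k:ℤ) ≠ 0 := by exact_mod_cast hkpos.ne'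
      exact this hk'
    -- B side
    obtain ⟨j, j', hjj', hposB⟩ := keyB (fun j => k' * (j : ℤ))
      (by
        intro a b h
        simp only at h
        have := mul_left_cancel₀ hk'0 h
        exact Fin.ext (by exact_mod_cast this))
    obtain ⟨c, hcdef⟩ : ∃ c : ℤ, c = ((j' : ℕ) : ℤ) - ((j : ℕ) : ℤ) := ⟨_, rfl⟩
    have hexpB : k' * ((j' : ℕ) : ℤ) - k' * ((j : ℕ) : ℤ) = k' * c := by rw [hcdef]; ring
    rw [hexpB] at hposB
    have hc0 : c ≠ 0 := by
      rw [hcdef]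
      intro h
      exact hjj' (Fin.ext (by omega))
    have hcabs1 : 1 ≤ c.natAbs := Int.natAbs_pos.2 hc0
    have hcabsNB : c.natAbs ≤ NB - 1 := by
      have h1 : (j : ℕ) < NB := j.2
      have h2 : (j' : ℕ) < NB := j'.2
      rw [hcdef]
      omega
    obtain ⟨i, hidef⟩ : ∃ i : Fin NB, i = (⟨c.natAbs - 1, by omega⟩ : Fin NB) := ⟨_, rfl⟩
    have hiv : ((i.1 + 1 : ℕ) : ℤ) = (c.natAbs : ℤ) := by
      have hi1 : (i.1 : ℕ) = c.natAbs - 1 := by rw [hidef]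
      rw [hi1]
      push_cast [hcabs1]
      omega
    have hGdiZ : (c.natAbs : ℤ) * (Gd i : ℤ) = (NB.factorial : ℤ) := by
      rw [← hiv]
      exact_mod_cast hGd i
    -- sigma
    obtain ⟨σ, hσdef⟩ : ∃ σ : ℤ, σ = if 0 ≤ c then (Gd i : ℤ) * δ else -((Gd i : ℤ) * δ) := ⟨_, rfl⟩
    have hYc : Yv = c * σ := by
      rcases le_or_gt 0 c with hc | hc
      · have habs : (c.natAbs : ℤ) = c := Int.natAbs_of_nonneg hc
        rw [hσdef, if_pos hc, hYdef, ← hGdiZ, habs]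
        ring
      · have habs : (c.natAbs : ℤ) = -c := by
          rw [Int.ofNat_natAbs_of_nonpos hc.le]
        rw [hσdef, if_neg (not_le.2 hc), hYdef, ← hGdiZ, habs]
        ring
    have hposA : 0 < μ (A ∩ ⇑(T ^ (m * σ)) '' A) := by
      rcases le_or_gt 0 c with hc | hc
      · have hms : m * σ = m * (Gd i : ℤ) * δ := by rw [hσdef, if_pos hc]; ring
        rw [hms, hδdef]
        exact hpos01 i
      · have hms : m * σ = -(m * (Gd i : ℤ) * δ) := by rw [hσdef, if_neg (not_le.2 hc)]; ring
        rw [hms, hδdef, measure_inter_image_symm T hT hT' hTm _ hA]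
        exact hpos01 i
    refine ⟨m * σ, k' * c, hposA, hposB, ?_⟩
    calc n = (k:ℤ) * m := hn.symm
    _ = (Yv * k') * m := by rw [hk']
    _ = ((c * σ) * k') * m := by rw [hYc]
    _ = (m * σ) * (k' * c) := by ring
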